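/- Let 0 < d_1 ≤ ⋯ ≤ d_n and let (a_1,…,a_n) with 0 ≤ a_i < d_i satisfy a_{i1} < d_{i1} − 1 for some index i1, and suppose there is i2 > i1 with a_{i2} > 0 and a_{i1} + a_{i2} ≤ d_{i1} − 1. Let a' be obtained from a by replacing a_{i1} by a_{i1} + a_{i2} and a_{i2} by 0. Then Π_i (d_i − a'_i) ≤ Π_i (d_i − a_i), with strict inequality if a_{i1} > 0. -/

import Mathlib

/-- The first exchange step in the proof of Lemma 1: moving `a i2` onto `a i1`
does not increase the product `∏ (d i - a i)`, strictly if `a i1 > 0`. -/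
theorem stmt2 (n : ℕ) (d a : Fin n → ℕ) (hd : ∀ i, 0 < d i) (hmono : Monotone d)
    (ha : ∀ i, a i < d i) (i1 i2 : Fin n) (h12 : i1 < i2)
    (h1 : a i1 < d i1 - 1) (h2 : 0 < a i2) (hsum : a i1 + a i2 ≤ d i1 - 1) :
    (∏ i : Fin n, (d i - (fun i => if i = i1 then a i1 + a i2 else
        if i = i2 then 0 else a i) i)) ≤ ∏ i : Fin n, (d i - a i) ∧
    (0 < a i1 →
      (∏ i : Fin n, (d i - (fun i => if i = i1 then a i1 + a i2 else
        if i = i2 then 0 else a i) i)) < ∏ i : Fin n, (d i - a i)) := by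
  have hne : i1 ≠ i2 := ne_of_lt h12
  have key : ∀ f : Fin n → ℕ, ∏ i, f i =
      f i2 * (f i1 * ∏ i ∈ (Finset.univ.erase i2).erase i1, f i) := by
    intro f
    rw [Finset.mul_prod_erase _ _ (Finset.mem_erase.mpr ⟨hne, Finset.mem_univ i1⟩),
      Finset.mul_prod_erase _ _ (Finset.mem_univ i2)]
  have hP : ∀ i ∈ (Finset.univ.erase i2).erase i1,
      (d i - (if i = i1 then a i1 + a i2 else if i = i2 then 0 else a i)) = d i - a i := by
    intro i hi
    simp only [Finset.mem_erase] at hi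
    simp [hi.1, hi.2.1]
  set P := ∏ i ∈ (Finset.univ.erase i2).erase i1, (d i - a i) with hPdef
  have hPpos : 0 < P := Finset.prod_pos fun i _ => Nat.sub_pos_of_lt (ha i)
  have heq1 : (∏ i : Fin n, (d i - (fun i => if i = i1 then a i1 + a i2 else
      if i = i2 then 0 else a i) i)) = d i2 * ((d i1 - (a i1 + a i2)) * P) := by
    rw [key, Finset.prod_congr rfl hP]
    simp [Ne.symm hne]
    exact Or.inl (Or.inl rfl)
  have heq2 : (∏ i : Fin n, (d i - a i)) = (d i2 - a i2) * ((d i1 - a i1) * P) := by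
    rw [key]
  -- arithmetic core
  have hd1 : a i1 + a i2 < d i1 := lt_of_le_of_lt hsum (Nat.sub_lt (hd i1) one_pos)
  have hdle : d i1 ≤ d i2 := hmono h12.le
  obtain ⟨c, hc⟩ : ∃ c, d i1 = a i1 + a i2 + c := ⟨d i1 - (a i1 + a i2), by omega⟩
  obtain ⟨e, he⟩ : ∃ e, d i2 = a i2 + e := ⟨d i2 - a i2, by omega⟩
  have hce : c ≤ e := by omega
  have hkey : d i2 * ((d i1 - (a i1 + a i2)) * P) ≤ (d i2 - a i2) * ((d i1 - a i1) * P) := by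
    have : d i2 * (d i1 - (a i1 + a i2)) ≤ (d i2 - a i2) * (d i1 - a i1) := by
      have h1' : d i1 - (a i1 + a i2) = c := by omega
      have h2' : d i2 - a i2 = e := by omega
      have h3' : d i1 - a i1 = a i2 + c := by omega
      rw [h1', h2', h3', he]
      have : a i2 * c ≤ a i2 * e := Nat.mul_le_mul_left _ hce
      nlinarith
    calc d i2 * ((d i1 - (a i1 + a i2)) * P) = d i2 * (d i1 - (a i1 + a i2)) * P := by ring
      _ ≤ (d i2 - a i2) * (d i1 - a i1) * P := Nat.mul_le_mul_right _ this
      _ = (d i2 - a i2) * ((d i1 - a i1) * P) := by ring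
  constructor
  · rw [heq1, heq2]; exact hkey
  · intro hpos
    rw [heq1, heq2]
    have hce' : c < e := by omega
    have hstrict : d i2 * (d i1 - (a i1 + a i2)) < (d i2 - a i2) * (d i1 - a i1) := by
      have h1' : d i1 - (a i1 + a i2) = c := by omega
      have h2' : d i2 - a i2 = e := by omega
      have h3' : d i1 - a i1 = a i2 + c := by omega
      rw [h1', h2', h3', he]
      have : a i2 * c < a i2 * e := Nat.mul_lt_mul_of_pos_left hce' h2
      nlinarith
    calc d i2 * ((d i1 - (a i1 + a i2)) * P) = d i2 * (d i1 - (a i1 + a i2)) * P := by ring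
      _ < (d i2 - a i2) * (d i1 - a i1) * P := Nat.mul_lt_mul_of_lt_of_le hstrict (le_refl P) hPpos
      _ = (d i2 - a i2) * ((d i1 - a i1) * P) := by ring
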